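/- Let t ≥ 1 and let G be an m-vertex graph with no K_t-subdivision whose minimum degree is at least (9/10)m. Then m ≤ max{(20/11)t, t^2/5}. -/

import Mathlib

/-- `G` contains a subdivision of `H`: an injective map of branch vertices together with
internally vertex-disjoint paths (whose internal vertices avoid branch vertices)
for each edge of `H`. -/
def ContainsSubdivision {V : Type*} {W : Type*} (G : SimpleGraph V) (H : SimpleGraph W) : Prop :=
  ∃ (f : W → V) (p : ∀ ⦃u v : W⦄, H.Adj u v → G.Walk (f u) (f v)),
    Function.Injective f ∧
    (∀ (u v : W) (h : H.Adj u v), (p h).IsPath) ∧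
    (∀ (u v : W) (h : H.Adj u v), ∀ x ∈ (p h).support.tail.dropLast, x ∉ Set.range f) ∧
    (∀ (u v u' v' : W) (h : H.Adj u v) (h' : H.Adj u' v'), s(u, v) ≠ s(u', v') →
      ∀ x ∈ (p h).support.tail.dropLast, x ∉ (p h').support.tail.dropLast)

open Finset SimpleGraph

lemma aux_count_pair {V : Type*} [Fintype V] [DecidableEq V] (u v : V) (huv : u ≠ v)
    {t : ℕ} (ht : 2 ≤ t) :
    (((univ : Finset V).powersetCard t).filter (fun B => u ∈ B ∧ v ∈ B)).card
      = (Fintype.card V - 2).choose (t - 2) := by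
  have hcard : ((univ : Finset V) \ {u, v}).card = Fintype.card V - 2 := by
    rw [Finset.card_sdiff_of_subset (by simp)]
    simp [Finset.card_insert_of_notMem, huv, Finset.card_univ]
  rw [← hcard, ← Finset.card_powersetCard]
  refine Finset.card_nbij' (fun B => B \ {u, v}) (fun C => C ∪ {u, v}) ?_ ?_ ?_ ?_
  · intro B (hB : B ∈ ((univ : Finset V).powersetCard t).filter (fun B => u ∈ B ∧ v ∈ B))
    simp only [Finset.mem_filter, Finset.mem_powersetCard, Finset.mem_coe] at hB ⊢
    obtain ⟨⟨hBs, hBc⟩, hu, hv⟩ := hB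
    constructor
    · exact Finset.sdiff_subset_sdiff hBs le_rfl
    · rw [Finset.card_sdiff_of_subset (by intro x hx; simp at hx; rcases hx with rfl | rfl <;> assumption)]
      simp [hBc, huv]
  · intro C (hC : C ∈ ((univ : Finset V) \ {u, v}).powersetCard (t - 2))
    show C ∪ {u, v} ∈ ((univ : Finset V).powersetCard t).filter (fun B => u ∈ B ∧ v ∈ B)
    simp only [Finset.mem_powersetCard, Finset.mem_filter] at hC ⊢
    obtain ⟨hCs, hCc⟩ := hC
    have hdisj : Disjoint C ({u, v} : Finset V) :=
      Finset.disjoint_right.2 fun x hx hxC => (Finset.mem_sdiff.1 (hCs hxC)).2 hx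
    refine ⟨⟨Finset.union_subset (hCs.trans Finset.sdiff_subset) (by simp), ?_⟩, by simp, by simp⟩
    rw [Finset.card_union_of_disjoint hdisj, hCc]
    have : ({u, v} : Finset V).card = 2 := by simp [Finset.card_insert_of_notMem, huv]
    omega
  · intro B (hB : B ∈ ((univ : Finset V).powersetCard t).filter (fun B => u ∈ B ∧ v ∈ B))
    simp only [Finset.mem_filter] at hB
    exact Finset.sdiff_union_of_subset
      (by intro x hx; simp at hx; rcases hx with rfl | rfl; exacts [hB.2.1, hB.2.2])
  · intro C (hC : C ∈ ((univ : Finset V) \ {u, v}).powersetCard (t - 2))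
    simp only [Finset.mem_powersetCard] at hC
    have hdisj : Disjoint C ({u, v} : Finset V) :=
      Finset.disjoint_right.2 fun x hx hxC => (Finset.mem_sdiff.1 (hC.1 hxC)).2 hx
    exact Finset.union_sdiff_cancel_right hdisj

/-- the pairs from `bad0` lying inside `B` -/
def badIn {V : Type*} [Fintype V] [DecidableEq V] (bad0 : Finset (Sym2 V)) (B : Finset V) :
    Finset (Sym2 V) :=
  bad0.filter (fun e => ∀ x ∈ e, x ∈ B)

lemma aux_double_count {V : Type*} [Fintype V] [DecidableEq V] (bad0 : Finset (Sym2 V))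
    (h0 : ∀ e ∈ bad0, ¬e.IsDiag) {t : ℕ} (ht : 2 ≤ t) :
    ∑ B ∈ (univ : Finset V).powersetCard t, (badIn bad0 B).card
      = bad0.card * (Fintype.card V - 2).choose (t - 2) := by
  have key : ∀ e ∈ bad0,
      (∑ B ∈ (univ : Finset V).powersetCard t, if (∀ x ∈ e, x ∈ B) then 1 else 0)
        = (Fintype.card V - 2).choose (t - 2) := by
    intro e he
    induction e using Sym2.inductionOn with
    | hf u v =>
      have hne : u ≠ v := by
        have := h0 _ he
        simpa [Sym2.mk_isDiag_iff] using this
      rw [Finset.sum_boole]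
      rw [show ((univ : Finset V).powersetCard t).filter (fun B => ∀ x ∈ s(u,v), x ∈ B)
          = ((univ : Finset V).powersetCard t).filter (fun B => u ∈ B ∧ v ∈ B) from
        Finset.filter_congr fun B _ => by simp [Sym2.mem_iff, forall_eq_or_imp]]
      exact_mod_cast aux_count_pair u v hne ht
  calc ∑ B ∈ (univ : Finset V).powersetCard t, (badIn bad0 B).card
      = ∑ B ∈ (univ : Finset V).powersetCard t, ∑ e ∈ bad0, if (∀ x ∈ e, x ∈ B) then 1 else 0 := by
        refine Finset.sum_congr rfl fun B _ => ?_
        rw [badIn, Finset.card_filter]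
    _ = ∑ e ∈ bad0, ∑ B ∈ (univ : Finset V).powersetCard t, if (∀ x ∈ e, x ∈ B) then 1 else 0 :=
        Finset.sum_comm
    _ = ∑ _e ∈ bad0, (Fintype.card V - 2).choose (t - 2) := Finset.sum_congr rfl key
    _ = bad0.card * (Fintype.card V - 2).choose (t - 2) := by
        rw [Finset.sum_const, smul_eq_mul]

lemma aux_choose_id {t m : ℕ} (ht : 2 ≤ t) (htm : t ≤ m) :
    t * (t - 1) * m.choose t = m * (m - 1) * (m - 2).choose (t - 2) := by
  obtain ⟨a, rfl⟩ : ∃ a, t = a + 2 := ⟨t - 2, by omega⟩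
  obtain ⟨b, rfl⟩ : ∃ b, m = b + 2 := ⟨m - 2, by omega⟩
  have h1 : (b + 1) * Nat.choose b a = Nat.choose (b+1) (a+1) * (a+1) := Nat.add_one_mul_choose_eq b a
  have h2 : (b + 2) * Nat.choose (b+1) (a+1) = Nat.choose (b+2) (a+2) * (a+2) := by
    have := Nat.add_one_mul_choose_eq (b + 1) (a + 1)
    simpa [Nat.succ_eq_add_one, Nat.add_assoc] using this
  have e1 : a + 2 - 1 = a + 1 := by omega
  have e2 : b + 2 - 1 = b + 1 := by omega
  have e3 : b + 2 - 2 = b := by omega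
  have e4 : a + 2 - 2 = a := by omega
  rw [e1, e2, e3, e4]
  calc (a + 2) * (a + 1) * (b + 2).choose (a + 2)
      = (a + 1) * (Nat.choose (b+2) (a+2) * (a + 2)) := by ring
    _ = (a + 1) * ((b + 2) * Nat.choose (b+1) (a+1)) := by rw [h2]
    _ = (b + 2) * (Nat.choose (b+1) (a+1) * (a + 1)) := by ring
    _ = (b + 2) * ((b + 1) * Nat.choose b a) := by rw [h1]
    _ = (b + 2) * (b + 1) * Nat.choose b a := by ring

lemma aux_choose_B {V : Type*} [Fintype V] [DecidableEq V] (bad0 : Finset (Sym2 V))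
    (h0 : ∀ e ∈ bad0, ¬e.IsDiag) {t : ℕ} (ht : 2 ≤ t) (htm : t ≤ Fintype.card V) :
    ∃ B : Finset V, B.card = t ∧
      (badIn bad0 B).card * (Fintype.card V * (Fintype.card V - 1))
        ≤ bad0.card * (t * (t - 1)) := by
  set m := Fintype.card V with hm
  have hne : ((univ : Finset V).powersetCard t).Nonempty := by
    rw [Finset.powersetCard_nonempty]
    simpa [Finset.card_univ]
  obtain ⟨B₀, hB₀mem, hB₀min⟩ :=
    Finset.exists_min_image _ (fun B => (badIn bad0 B).card) hne
  have hB₀card : B₀.card = t := (Finset.mem_powersetCard.1 hB₀mem).2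
  refine ⟨B₀, hB₀card, ?_⟩
  have hsum : ((univ : Finset V).powersetCard t).card * (badIn bad0 B₀).card
      ≤ bad0.card * (m - 2).choose (t - 2) := by
    rw [← aux_double_count bad0 h0 ht]
    exact Finset.card_nsmul_le_sum _ _ _ fun B hB => hB₀min B hB
  rw [Finset.card_powersetCard, Finset.card_univ, ← hm] at hsum
  have h2 : (m - 2).choose (t - 2) * ((badIn bad0 B₀).card * (m * (m - 1)))
      ≤ (m - 2).choose (t - 2) * (bad0.card * (t * (t - 1))) := by
    calc (m - 2).choose (t - 2) * ((badIn bad0 B₀).card * (m * (m - 1)))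
        = (t * (t - 1) * m.choose t) * (badIn bad0 B₀).card := by
          rw [aux_choose_id ht htm]; ring
      _ = (t * (t - 1)) * (m.choose t * (badIn bad0 B₀).card) := by ring
      _ ≤ (t * (t - 1)) * (bad0.card * (m - 2).choose (t - 2)) :=
          Nat.mul_le_mul_left _ hsum
      _ = (m - 2).choose (t - 2) * (bad0.card * (t * (t - 1))) := by ring
  exact Nat.le_of_mul_le_mul_left h2 (Nat.choose_pos (by omega))

lemma aux_arith_int (t n k b : ℤ) (ht : 2 ≤ t) (hk : 0 ≤ k) (hb : 0 ≤ b)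
    (htm : t ≤ n) (ht2 : t^2 + 1 ≤ 5*(n+1)) (hkn : 10*k + 10 ≤ n + 1)
    (hbb : 2*b*n ≤ t*(t-1)*k) : b + t + 2*k + 2 ≤ n := by
  have hn : 10 ≤ n + 1 := by linarith
  have key : t*(t-1)*k ≤ 2*n*(n - t - 2*k - 2) := by
    rcases le_or_gt t 9 with h9 | h9
    · nlinarith [mul_nonneg hk (sub_nonneg.2 h9), sq_nonneg (n - 10*k), sq_nonneg (t - 5),
        mul_nonneg hk hk]
    · nlinarith [sq_nonneg (n - 10*k), sq_nonneg (t - 10), mul_nonneg hk hk,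
        mul_nonneg hk (sub_nonneg.2 h9.le)]
  nlinarith [key, hbb, mul_pos (show (0:ℤ) < n by linarith) (show (0:ℤ) < n by linarith)]

/-- common neighbors of an unordered pair -/
def commonNbrs {V : Type*} [Fintype V] [DecidableEq V] (G : SimpleGraph V) [DecidableRel G.Adj] :
    Sym2 V → Finset V :=
  Sym2.lift ⟨fun u v => G.neighborFinset u ∩ G.neighborFinset v, fun u v => by
    simp [Finset.inter_comm]⟩

lemma mem_commonNbrs_adj {V : Type*} [Fintype V] [DecidableEq V] (G : SimpleGraph V)
    [DecidableRel G.Adj] (z : Sym2 V) (x : V) (hx : x ∈ z) (w : V)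
    (hw : w ∈ commonNbrs G z) : G.Adj x w := by
  induction z using Sym2.inductionOn with
  | hf u v =>
    rw [commonNbrs, Sym2.lift_mk] at hw
    rw [Sym2.mem_iff] at hx
    simp only [Finset.mem_inter, SimpleGraph.mem_neighborFinset] at hw
    rcases hx with rfl | rfl
    · exact hw.1
    · exact hw.2

lemma aux_construct {V : Type*} [Fintype V] [DecidableEq V] (G : SimpleGraph V)
    [DecidableRel G.Adj] {t : ℕ} (B : Finset V) (hB : B.card = t)
    (bad : Finset (Sym2 V))
    (hbadmem : ∀ {u v : V}, u ≠ v → u ∈ B → v ∈ B → ¬G.Adj u v → s(u, v) ∈ bad)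
    (g : {e : Sym2 V // e ∈ bad} → V) (hginj : Function.Injective g)
    (hadj : ∀ (e : {e : Sym2 V // e ∈ bad}), ∀ x ∈ e.1, G.Adj x (g e))
    (hgB : ∀ e, g e ∉ B) : ContainsSubdivision G (⊤ : SimpleGraph (Fin t)) := by
  have hcard : Fintype.card ↥B = t := by rw [Fintype.card_coe, hB]
  let eqv : ↥B ≃ Fin t := Fintype.equivFinOfCardEq hcard
  set f : Fin t → V := fun i => ((eqv.symm i : ↥B) : V) with hf
  have hfinj : Function.Injective f :=
    Subtype.val_injective.comp eqv.symm.injective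
  have hfB : ∀ i, f i ∈ B := fun i => (eqv.symm i).2
  have hrange : Set.range f = ↑B := by
    ext x
    constructor
    · rintro ⟨i, rfl⟩; exact hfB i
    · intro hx
      exact ⟨eqv ⟨x, hx⟩, by simp [hf]⟩
  have hmem : ∀ {u v : Fin t}, u ≠ v → ¬G.Adj (f u) (f v) → s(f u, f v) ∈ bad :=
    fun {u v} hne had => hbadmem (fun h => hne (hfinj h)) (hfB _) (hfB _) had
  refine ⟨f, fun u v h =>
    if had : G.Adj (f u) (f v) then Walk.cons had Walk.nil
    else Walk.cons (hadj ⟨_, hmem h.ne had⟩ (f u) (Sym2.mem_mk_left _ _))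
      (Walk.cons ((hadj ⟨_, hmem h.ne had⟩ (f v) (Sym2.mem_mk_right _ _)).symm) Walk.nil),
    hfinj, ?_, ?_, ?_⟩
  · intro u v h
    beta_reduce
    by_cases had : G.Adj (f u) (f v)
    · rw [dif_pos had]
      simp [SimpleGraph.Walk.isPath_def, had.ne]
    · rw [dif_neg had]
      have hne : f u ≠ f v := fun hh => h.ne (hfinj hh)
      have h1 : f u ≠ g ⟨_, hmem h.ne had⟩ := fun hh => hgB _ (hh ▸ hfB u)
      have h2 : f v ≠ g ⟨_, hmem h.ne had⟩ := fun hh => hgB _ (hh ▸ hfB v)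
      simp [SimpleGraph.Walk.isPath_def, hne, h1, h2, Ne.symm h1, Ne.symm h2]
  · intro u v h x hx
    beta_reduce at hx
    by_cases had : G.Adj (f u) (f v)
    · rw [dif_pos had] at hx
      simp at hx
    · rw [dif_neg had] at hx
      simp at hx
      subst hx
      rw [hrange]
      exact fun hc => hgB _ hc
  · intro u v u' v' h h' hne x hx hx'
    beta_reduce at hx hx'
    by_cases had : G.Adj (f u) (f v)
    · rw [dif_pos had] at hx; simp at hx
    by_cases had' : G.Adj (f u') (f v')
    · rw [dif_pos had'] at hx'; simp at hx'
    rw [dif_neg had] at hx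
    rw [dif_neg had'] at hx'
    simp at hx hx'
    have : g ⟨_, hmem h.ne had⟩ = g ⟨_, hmem h'.ne had'⟩ := by rw [← hx, ← hx']
    have heq := hginj this
    have hsym : s(f u, f v) = s(f u', f v') := congrArg Subtype.val heq
    rw [Sym2.eq_iff] at hsym
    apply hne
    rw [Sym2.eq_iff]
    rcases hsym with ⟨h1, h2⟩ | ⟨h1, h2⟩
    · exact Or.inl ⟨hfinj h1, hfinj h2⟩
    · exact Or.inr ⟨hfinj h1, hfinj h2⟩

/-- If `G` is an `m`-vertex graph with no `K_t`-subdivision and minimum degree at least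
`(9/10)m`, then `m ≤ max{(20/11)t, t^2/5}`. -/
theorem card_le_of_min_degree_no_subdivision {V : Type*} [Fintype V] [DecidableEq V]
    (G : SimpleGraph V) [DecidableRel G.Adj] {t m : ℕ} (ht : 1 ≤ t)
    (hm : Fintype.card V = m)
    (hsub : ¬ ContainsSubdivision G (⊤ : SimpleGraph (Fin t)))
    (hdeg : ∀ v : V, (9 : ℝ) / 10 * m ≤ G.degree v) :
    (m : ℝ) ≤ max (20 / 11 * t) (t ^ 2 / 5) := by
  by_contra hcon
  push_neg at hcon
  have hlt : max (20 / 11 * t) (t ^ 2 / 5) < m := by exact_mod_cast hcon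
  rw [max_lt_iff] at hlt
  obtain ⟨h1, h2⟩ := hlt
  have htm : t < m := by omega
  have ht2sq : t ^ 2 + 1 ≤ 5 * m := by
    have := (Nat.div_lt_iff_lt_mul (by norm_num : 0 < 5)).1 h2
    omega
  -- V is nonempty
  have hV0 : 0 < Fintype.card V := by omega
  obtain ⟨v₀⟩ := Fintype.card_pos_iff.1 hV0
  -- the case t = 1
  by_cases ht1 : t = 1
  · subst ht1
    refine hsub ⟨fun _ => v₀, fun u v h => (h.ne (Subsingleton.elim u v)).elim,
      fun a b _ => Subsingleton.elim a b, ?_, ?_, ?_⟩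
    · exact fun u v h => (h.ne (Subsingleton.elim u v)).elim
    · exact fun u v h => (h.ne (Subsingleton.elim u v)).elim
    · exact fun u v u' v' h => (h.ne (Subsingleton.elim u v)).elim
  have ht2 : 2 ≤ t := by omega
  -- m ≥ 10
  have hdlt : G.degree v₀ < m := by rw [← hm]; exact G.degree_lt_card_verts v₀
  have hm10 : 10 ≤ m := by
    by_contra hc
    have hmr : (m : ℝ) ≤ 9 := by exact_mod_cast Nat.lt_succ_iff.1 (by omega)
    have hd1 : (G.degree v₀ : ℝ) ≤ (m : ℝ) - 1 := by
      have : (G.degree v₀ : ℝ) + 1 ≤ m := by exact_mod_cast hdlt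
      linarith
    have := hdeg v₀
    have hm2 : (2:ℝ) ≤ m := by
      have : (2:ℕ) ≤ m := by omega
      exact_mod_cast this
    nlinarith
  -- minimum degree in ℕ
  have hdegN : ∀ v : V, 9 * m ≤ 10 * G.degree v := by
    intro v
    have h10 : (9 * m : ℝ) ≤ 10 * G.degree v := by have := hdeg v; linarith
    exact_mod_cast h10
  set d : ℕ := (9 * m + 9) / 10 with hd_def
  have hd : ∀ v : V, d ≤ G.degree v := fun v => by have := hdegN v; omega
  have hd9 : 9 * m ≤ 10 * d := by omega
  have hdm1 : d ≤ m - 1 := by have := hd v₀; omega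
  set k : ℕ := m - 1 - d with hk_def
  -- the compl graph decidability
  letI : DecidableRel Gᶜ.Adj := fun u v => decidable_of_iff _ (G.compl_adj u v).symm
  set bad0 : Finset (Sym2 V) := Gᶜ.edgeFinset with hbad0
  have h0 : ∀ e ∈ bad0, ¬e.IsDiag := fun e he =>
    Gᶜ.not_isDiag_of_mem_edgeSet (mem_edgeFinset.1 he)
  -- degree sum bound
  have hdc : ∀ v : V, Gᶜ.degree v ≤ k := by
    intro v
    have : Gᶜ.degree v = Fintype.card V - 1 - G.degree v := degree_compl G v
    rw [this, hm]
    have := hd v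
    omega
  have hN : 2 * bad0.card ≤ m * k := by
    have hs : ∑ v : V, Gᶜ.degree v = 2 * bad0.card := Gᶜ.sum_degrees_eq_twice_card_edges
    rw [← hs]
    calc ∑ v : V, Gᶜ.degree v ≤ (univ : Finset V).card • k :=
          Finset.sum_le_card_nsmul _ _ _ fun v _ => hdc v
      _ = m * k := by rw [Finset.card_univ, hm, smul_eq_mul]
  -- choose a good branch set
  obtain ⟨B, hBcard, hBle⟩ := aux_choose_B bad0 h0 ht2 (by rw [hm]; omega)
  rw [hm] at hBle
  set b : ℕ := (badIn bad0 B).card with hb_def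
  -- 2 * b * (m-1) ≤ t*(t-1)*k
  have hbk : 2 * b * (m - 1) ≤ t * (t - 1) * k := by
    have step1 : m * (2 * b * (m - 1)) ≤ m * (t * (t - 1) * k) := by
      calc m * (2 * b * (m - 1)) = 2 * (b * (m * (m - 1))) := by ring
        _ ≤ 2 * (bad0.card * (t * (t - 1))) := by
            exact Nat.mul_le_mul_left _ hBle
        _ = (2 * bad0.card) * (t * (t - 1)) := by ring
        _ ≤ (m * k) * (t * (t - 1)) := Nat.mul_le_mul_right _ hN
        _ = m * (t * (t - 1) * k) := by ring
    exact Nat.le_of_mul_le_mul_left step1 (by omega)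
  -- key arithmetic conclusion
  have hkey : b + t + 2 * k + 3 ≤ m := by
    have hint := aux_arith_int t ((m : ℤ) - 1) k b (by exact_mod_cast ht2)
      (by positivity) (by positivity)
      (by push_cast; omega)
      (by push_cast; push_cast at ht2sq ⊢; nlinarith [ht2sq])
      (by push_cast; omega)
      (by
        have : ((2 * b * (m - 1) : ℕ) : ℤ) ≤ ((t * (t - 1) * k : ℕ) : ℤ) := by
          exact_mod_cast hbk
        push_cast [Nat.cast_sub (by omega : 1 ≤ m), Nat.cast_sub (by omega : 1 ≤ t)] at this
        convert this using 1 <;> push_cast [Nat.cast_sub (by omega : 1 ≤ m),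
          Nat.cast_sub (by omega : 1 ≤ t)] <;> ring)
    have : (b : ℤ) + t + 2 * k + 2 ≤ (m : ℤ) - 1 := hint
    exact_mod_cast (by linarith : (b : ℤ) + t + 2 * k + 3 ≤ (m : ℤ))
  -- Hall's condition
  set pools : {e : Sym2 V // e ∈ badIn bad0 B} → Finset V :=
    fun e => commonNbrs G e.1 \ B with hpools
  have hpool : ∀ e : {e : Sym2 V // e ∈ badIn bad0 B}, b < (pools e).card := by
    rintro ⟨e, he⟩
    rw [badIn, Finset.mem_filter] at he
    obtain ⟨he0, heB⟩ := he
    revert he0 heB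
    induction e using Sym2.inductionOn with
    | hf u v =>
      intro he0 heB
      have hcc := Finset.card_inter_add_card_union (G.neighborFinset u) (G.neighborFinset v)
      have hunion : (G.neighborFinset u ∪ G.neighborFinset v).card ≤ m := by
        rw [← hm, ← Finset.card_univ]
        exact Finset.card_le_univ _
      have hdu : d ≤ (G.neighborFinset u).card := by
        rw [SimpleGraph.card_neighborFinset_eq_degree]; exact hd u
      have hdv : d ≤ (G.neighborFinset v).card := by
        rw [SimpleGraph.card_neighborFinset_eq_degree]; exact hd v
      have hcN : commonNbrs G s(u, v) = G.neighborFinset u ∩ G.neighborFinset v := by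
        rw [commonNbrs, Sym2.lift_mk]
      have hsd := Finset.le_card_sdiff B (commonNbrs G s(u, v))
      rw [hcN, hBcard] at hsd
      show b < (commonNbrs G s(u, v) \ B).card
      rw [hcN]
      omega
  have hall : ∀ s : Finset {e : Sym2 V // e ∈ badIn bad0 B},
      s.card ≤ (s.biUnion pools).card := by
    intro s
    rcases s.eq_empty_or_nonempty with rfl | ⟨e, he⟩
    · simp
    · calc s.card ≤ Fintype.card {e : Sym2 V // e ∈ badIn bad0 B} := Finset.card_le_univ s
        _ = b := by rw [Fintype.card_coe]
        _ ≤ (pools e).card := (hpool e).le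
        _ ≤ (s.biUnion pools).card :=
            Finset.card_le_card (Finset.subset_biUnion_of_mem pools he)
  obtain ⟨g, hginj, hgmem⟩ :=
    (Finset.all_card_le_biUnion_card_iff_exists_injective pools).1 hall
  -- build the subdivision
  refine hsub (aux_construct G B hBcard (badIn bad0 B) ?_ g hginj ?_ ?_)
  · intro u v hne hu hv hnadj
    rw [badIn, Finset.mem_filter]
    constructor
    · rw [hbad0, mem_edgeFinset, SimpleGraph.mem_edgeSet]
      exact ⟨hne, hnadj⟩
    · intro x hx
      rw [Sym2.mem_iff] at hx
      rcases hx with rfl | rfl <;> assumption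
  · intro e x hx
    have := hgmem e
    rw [hpools, Finset.mem_sdiff] at this
    exact mem_commonNbrs_adj G e.1 x hx (g e) this.1
  · intro e
    have := hgmem e
    rw [hpools, Finset.mem_sdiff] at this
    exact this.2
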